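/- arXiv:1306.5966 — 2 statements merged into one kernel-verified Lean document; each statement's English description precedes it below -/
import Mathlib

section
/- Let G, c > 0 be real constants, ρ : ℝ³ → ℝ continuous, and Φ : ℝ³ → ℝ three times continuously differentiable with Φ > 0 everywhere, satisfying the Prague field equation ΔΦ = (4πG/c²)·[ρ·Φ + (c²/(8πG))·‖∇Φ‖²/Φ] on ℝ³. Define the tensor field t_{ab} := (c²/(4πG))·(1/Φ)·[∂_aΦ·∂_bΦ − (1/2)·δ_{ab}·‖∇Φ‖²] for a,b ∈ {1,2,3}. Then for each index a and every x ∈ ℝ³, Σ_{b=1}^{3} ∂_b t_{ab}(x) = ρ(x)·∂_aΦ(x); i.e., the gravitational force density f_a = −ρ·∂_aΦ is the negative divergence of the symmetric tensor t_{ab}. -/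
open Real

/-- The `i`-th partial derivative of a function on Euclidean `ℝ³`. -/
noncomputable def pderiv3 (i : Fin 3) (f : EuclideanSpace ℝ (Fin 3) → ℝ)
    (x : EuclideanSpace ℝ (Fin 3)) : ℝ :=
  fderiv ℝ f x (EuclideanSpace.single i 1)

/-- The Euclidean Laplacian on `ℝ³`. -/
noncomputable def lap3 (f : EuclideanSpace ℝ (Fin 3) → ℝ)
    (x : EuclideanSpace ℝ (Fin 3)) : ℝ :=
  ∑ i, pderiv3 i (pderiv3 i f) x

/-- The squared norm of the gradient, `‖∇f‖²`, on `ℝ³`. -/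
noncomputable def gradSq3 (f : EuclideanSpace ℝ (Fin 3) → ℝ)
    (x : EuclideanSpace ℝ (Fin 3)) : ℝ :=
  ∑ i, (pderiv3 i f x) ^ 2

section Aux

variable {f g : EuclideanSpace ℝ (Fin 3) → ℝ} {x : EuclideanSpace ℝ (Fin 3)} {i : Fin 3}

lemma pderiv3_mul (hf : DifferentiableAt ℝ f x) (hg : DifferentiableAt ℝ g x) :
    pderiv3 i (fun y => f y * g y) x = pderiv3 i f x * g x + f x * pderiv3 i g x := by
  unfold pderiv3
  rw [fderiv_fun_mul hf hg]
  simp only [ContinuousLinearMap.add_apply, ContinuousLinearMap.smul_apply, smul_eq_mul]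
  ring

lemma pderiv3_const_mul (hf : DifferentiableAt ℝ f x) (k : ℝ) :
    pderiv3 i (fun y => k * f y) x = k * pderiv3 i f x := by
  unfold pderiv3
  rw [fderiv_const_mul hf]
  simp

lemma pderiv3_sub (hf : DifferentiableAt ℝ f x) (hg : DifferentiableAt ℝ g x) :
    pderiv3 i (fun y => f y - g y) x = pderiv3 i f x - pderiv3 i g x := by
  unfold pderiv3
  rw [fderiv_fun_sub hf hg]
  simp

lemma pderiv3_inv (hf : DifferentiableAt ℝ f x) (hne : f x ≠ 0) :
    pderiv3 i (fun y => (f y)⁻¹) x = -(pderiv3 i f x) / (f x) ^ 2 := by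
  have h : HasFDerivAt (fun y => (f y)⁻¹) ((-((f x) ^ 2)⁻¹) • fderiv ℝ f x) x :=
    (hasDerivAt_inv hne).comp_hasFDerivAt x hf.hasFDerivAt
  unfold pderiv3
  rw [h.fderiv]
  simp only [ContinuousLinearMap.smul_apply, smul_eq_mul]
  ring

lemma differentiableAt_inv_comp (hf : DifferentiableAt ℝ f x) (hne : f x ≠ 0) :
    DifferentiableAt ℝ (fun y => (f y)⁻¹) x :=
  ((hasDerivAt_inv hne).comp_hasFDerivAt x hf.hasFDerivAt).differentiableAt

lemma pderiv3_hasFDerivAt (hf : ContDiff ℝ 3 f) (j : Fin 3) (x : EuclideanSpace ℝ (Fin 3)) :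
    HasFDerivAt (pderiv3 j f)
      ((ContinuousLinearMap.apply ℝ ℝ (EuclideanSpace.single j 1)).comp
        (fderiv ℝ (fderiv ℝ f) x)) x := by
  have hdf : DifferentiableAt ℝ (fderiv ℝ f) x := by
    have h2 : ContDiff ℝ 2 (fderiv ℝ f) := hf.fderiv_right (by norm_num)
    exact (h2.differentiable (by norm_num)).differentiableAt
  exact (ContinuousLinearMap.apply ℝ ℝ (EuclideanSpace.single j 1)).hasFDerivAt.comp x
    hdf.hasFDerivAt

lemma pderiv3_differentiableAt (hf : ContDiff ℝ 3 f) (j : Fin 3)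
    (x : EuclideanSpace ℝ (Fin 3)) : DifferentiableAt ℝ (pderiv3 j f) x :=
  (pderiv3_hasFDerivAt hf j x).differentiableAt

lemma pderiv3_pderiv3 (hf : ContDiff ℝ 3 f) (i j : Fin 3) (x : EuclideanSpace ℝ (Fin 3)) :
    pderiv3 i (pderiv3 j f) x =
      fderiv ℝ (fderiv ℝ f) x (EuclideanSpace.single i 1) (EuclideanSpace.single j 1) := by
  show fderiv ℝ (pderiv3 j f) x (EuclideanSpace.single i 1) = _
  rw [(pderiv3_hasFDerivAt hf j x).fderiv]
  rfl

lemma pderiv3_symm (hf : ContDiff ℝ 3 f) (i j : Fin 3) (x : EuclideanSpace ℝ (Fin 3)) :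
    pderiv3 i (pderiv3 j f) x = pderiv3 j (pderiv3 i f) x := by
  rw [pderiv3_pderiv3 hf, pderiv3_pderiv3 hf]
  exact (hf.contDiffAt.isSymmSndFDerivAt (by norm_num)) _ _

lemma gradSq3_pderiv (hf : ContDiff ℝ 3 f) (i : Fin 3) (x : EuclideanSpace ℝ (Fin 3)) :
    pderiv3 i (gradSq3 f) x =
      ∑ j, 2 * pderiv3 j f x * pderiv3 i (pderiv3 j f) x := by
  have hrw : gradSq3 f = fun y => ∑ j, pderiv3 j f y * pderiv3 j f y := by
    funext y
    simp [gradSq3, sq]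
  rw [hrw]
  show fderiv ℝ _ x (EuclideanSpace.single i 1) = _
  rw [fderiv_fun_sum (u := Finset.univ)
    (A := fun j y => pderiv3 j f y * pderiv3 j f y)
    (fun j _ => (pderiv3_differentiableAt hf j x).mul (pderiv3_differentiableAt hf j x))]
  rw [ContinuousLinearMap.sum_apply]
  refine Finset.sum_congr rfl fun j _ => ?_
  have h := @pderiv3_mul (pderiv3 j f) (pderiv3 j f) x i
    (pderiv3_differentiableAt hf j x) (pderiv3_differentiableAt hf j x)
  show pderiv3 i (fun y => pderiv3 j f y * pderiv3 j f y) x = _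
  rw [h]
  ring

lemma gradSq3_differentiableAt (hf : ContDiff ℝ 3 f) (x : EuclideanSpace ℝ (Fin 3)) :
    DifferentiableAt ℝ (gradSq3 f) x := by
  have hrw : gradSq3 f = fun y => ∑ j, (pderiv3 j f y) ^ 2 := rfl
  rw [hrw]
  exact DifferentiableAt.fun_sum fun j _ => (pderiv3_differentiableAt hf j x).pow 2

end Aux

/-- For a `C³` positive solution `Φ` of the Prague field
equation with continuous source `ρ`, the force density `f_a = −ρ∂_aΦ`
is minus the divergence of the symmetric stress tensor
`t_{ab} = (c²/(4πG))·(1/Φ)·[∂_aΦ∂_bΦ − ½δ_{ab}‖∇Φ‖²]`, i.e.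
`∑_b ∂_b t_{ab} = ρ·∂_aΦ`. -/
theorem prague_force_is_divergence_of_stress
    (G c : ℝ) (hG : 0 < G) (hc : 0 < c)
    (ρ Φ : EuclideanSpace ℝ (Fin 3) → ℝ)
    (hρ : Continuous ρ)
    (hΦ : ContDiff ℝ 3 Φ) (hΦpos : ∀ x, 0 < Φ x)
    (heq : ∀ x, lap3 Φ x =
      (4 * π * G / c ^ 2) *
        (ρ x * Φ x + (c ^ 2 / (8 * π * G)) * gradSq3 Φ x / Φ x)) :
    ∀ (a : Fin 3) (x : EuclideanSpace ℝ (Fin 3)),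
      (∑ b, pderiv3 b
        (fun y => (c ^ 2 / (4 * π * G)) * (1 / Φ y) *
          (pderiv3 a Φ y * pderiv3 b Φ y -
            (1 / 2) * (if a = b then (1:ℝ) else 0) * gradSq3 Φ y)) x)
      = ρ x * pderiv3 a Φ x := by
  intro a x
  have hΦd : ∀ y, DifferentiableAt ℝ Φ y :=
    fun y => (hΦ.differentiable (by norm_num)).differentiableAt
  have hΦne : Φ x ≠ 0 := (hΦpos x).ne'
  have hPd : ∀ (j : Fin 3), DifferentiableAt ℝ (pderiv3 j Φ) x :=
    fun j => pderiv3_differentiableAt hΦ j x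
  have hSd : DifferentiableAt ℝ (gradSq3 Φ) x := gradSq3_differentiableAt hΦ x
  have hinvd : DifferentiableAt ℝ (fun y => (Φ y)⁻¹) x :=
    differentiableAt_inv_comp (hΦd x) hΦne
  have key : ∀ b : Fin 3,
      pderiv3 b
        (fun y => (c ^ 2 / (4 * π * G)) * (1 / Φ y) *
          (pderiv3 a Φ y * pderiv3 b Φ y -
            (1 / 2) * (if a = b then (1:ℝ) else 0) * gradSq3 Φ y)) x
      = (c ^ 2 / (4 * π * G)) * ( -(pderiv3 b Φ x) / (Φ x) ^ 2 *
            (pderiv3 a Φ x * pderiv3 b Φ x -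
              (1 / 2) * (if a = b then (1:ℝ) else 0) * gradSq3 Φ x)
          + (Φ x)⁻¹ *
            (pderiv3 b (pderiv3 a Φ) x * pderiv3 b Φ x
              + pderiv3 a Φ x * pderiv3 b (pderiv3 b Φ) x
              - (1 / 2) * (if a = b then (1:ℝ) else 0) * pderiv3 b (gradSq3 Φ) x)) := by
    intro b
    set δ : ℝ := if a = b then (1:ℝ) else 0 with hδ
    have hgd : DifferentiableAt ℝ
        (fun y => pderiv3 a Φ y * pderiv3 b Φ y - 1 / 2 * δ * gradSq3 Φ y) x :=
      ((hPd a).mul (hPd b)).sub (hSd.const_mul _)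
    have step1 : (fun y => (c ^ 2 / (4 * π * G)) * (1 / Φ y) *
          (pderiv3 a Φ y * pderiv3 b Φ y - 1 / 2 * δ * gradSq3 Φ y))
        = fun y => (c ^ 2 / (4 * π * G)) * ((fun z => (Φ z)⁻¹) y *
          ((fun z => pderiv3 a Φ z * pderiv3 b Φ z -
            1 / 2 * δ * gradSq3 Φ z) y)) := by
      funext y; rw [one_div]; ring
    rw [step1]
    rw [pderiv3_const_mul (hinvd.fun_mul hgd)]
    rw [pderiv3_mul hinvd hgd]
    rw [pderiv3_inv (hΦd x) hΦne]
    rw [pderiv3_sub ((hPd a).fun_mul (hPd b)) (hSd.const_mul _)]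
    rw [pderiv3_mul (hPd a) (hPd b)]
    rw [pderiv3_const_mul hSd]
  simp only [key]
  have hgp : ∀ i : Fin 3, pderiv3 i (gradSq3 Φ) x
      = ∑ j, 2 * pderiv3 j Φ x * pderiv3 i (pderiv3 j Φ) x :=
    fun i => gradSq3_pderiv hΦ i x
  have hT : pderiv3 0 (pderiv3 0 Φ) x + pderiv3 1 (pderiv3 1 Φ) x
        + pderiv3 2 (pderiv3 2 Φ) x =
      (4 * π * G / c ^ 2) *
        (ρ x * Φ x + c ^ 2 / (8 * π * G) * gradSq3 Φ x / Φ x) := by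
    have h := heq x
    rw [lap3, Fin.sum_univ_three] at h
    exact h
  have hSsum : gradSq3 Φ x =
      pderiv3 0 Φ x ^ 2 + pderiv3 1 Φ x ^ 2 + pderiv3 2 Φ x ^ 2 := by
    rw [gradSq3, Fin.sum_univ_three]
  have hπ : (π : ℝ) ≠ 0 := Real.pi_ne_zero
  have hGne : G ≠ 0 := hG.ne'
  have hcne : c ≠ 0 := hc.ne'
  rw [hSsum] at hT
  rw [Fin.sum_univ_three]
  simp only [hgp, Fin.sum_univ_three]
  fin_cases a
  · simp only [Fin.isValue, Fin.zero_eta, Fin.mk_one, Fin.reduceEq, if_true, if_false, reduceIte]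
    rw [pderiv3_symm hΦ 1 0, pderiv3_symm hΦ 2 0, pderiv3_symm hΦ 2 1, hSsum]
    field_simp at hT ⊢
    linear_combination (pderiv3 0 Φ x / 4) * hT
  · simp only [Fin.isValue, Fin.zero_eta, Fin.mk_one, Fin.reduceEq, if_true, if_false, reduceIte]
    rw [pderiv3_symm hΦ 1 0, pderiv3_symm hΦ 2 0, pderiv3_symm hΦ 2 1, hSsum]
    field_simp at hT ⊢
    linear_combination (pderiv3 1 Φ x / 4) * hT
  · simp only [Fin.isValue, Fin.zero_eta, Fin.mk_one, Fin.reduceFinMk, Fin.reduceEq, if_true, if_false, reduceIte]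
    rw [pderiv3_symm hΦ 1 0, pderiv3_symm hΦ 2 0, pderiv3_symm hΦ 2 1, hSsum]
    field_simp at hT ⊢
    linear_combination (pderiv3 2 Φ x / 4) * hT
end

section
/- Define g : (0,∞) → ℝ by g(x) := (1/x)·(1 − tanh(√(3x))/√(3x)). Then: (i) 0 < g(x) < 1 for all x > 0; (ii) g(x) → 1 as x → 0⁺; (iii) g(x) → 0 as x → ∞. Consequently, for a homogeneous star of fixed bare mass M_b > 0, the gravitational mass M_g(x) := M_b·g(x) satisfies 0 < M_g(x) < M_b for all x > 0, M_g(x) → M_b as x → 0⁺ (infinite dispersion), and M_g(x) → 0 as x → ∞ (infinite compression). -/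
open Real Filter Topology

private lemma aux_pos_of_deriv {f f' : ℝ → ℝ} (h0 : f 0 = 0)
    (hd : ∀ x, HasDerivAt f (f' x) x) (hpos : ∀ x, 0 < x → 0 < f' x)
    {u : ℝ} (hu : 0 < u) : 0 < f u := by
  have hmono : StrictMonoOn f (Set.Ici 0) := by
    apply strictMonoOn_of_deriv_pos (convex_Ici 0)
      (fun x _ => (hd x).continuousAt.continuousWithinAt)
    intro x hx
    rw [interior_Ici] at hx
    rw [(hd x).deriv]
    exact hpos x hx
  have := hmono (Set.self_mem_Ici) (Set.mem_Ici.mpr hu.le) hu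
  rwa [h0] at this

private lemma aux_nonneg_of_deriv {f f' : ℝ → ℝ} (h0 : f 0 = 0)
    (hd : ∀ x, HasDerivAt f (f' x) x) (hpos : ∀ x, 0 < x → 0 ≤ f' x)
    {u : ℝ} (hu : 0 ≤ u) : 0 ≤ f u := by
  have hmono : MonotoneOn f (Set.Ici 0) := by
    apply monotoneOn_of_deriv_nonneg (convex_Ici 0)
      (fun x _ => (hd x).continuousAt.continuousWithinAt)
      (fun x hx => (hd x).differentiableAt.differentiableWithinAt)
    intro x hx
    rw [interior_Ici] at hx
    rw [(hd x).deriv]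
    exact hpos x hx
  have := hmono (Set.self_mem_Ici) (Set.mem_Ici.mpr hu) hu
  rwa [h0] at this

private lemma L1 {u : ℝ} (hu : 0 < u) : Real.sinh u < u * Real.cosh u := by
  have : 0 < u * Real.cosh u - Real.sinh u := by
    apply aux_pos_of_deriv (f' := fun x => x * Real.sinh x) (by simp) _ _ hu
    · intro x
      have := ((hasDerivAt_id x).mul (Real.hasDerivAt_cosh x)).sub (Real.hasDerivAt_sinh x)
      refine this.congr_deriv ?_
      simp only [id_eq]; push_cast; ring
    · intro x hx
      exact mul_pos hx (Real.sinh_pos_iff.mpr hx)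
  linarith

private lemma L2 {u : ℝ} (hu : 0 ≤ u) : u ^ 3 / 3 ≤ u * Real.cosh u - Real.sinh u := by
  have : 0 ≤ u * Real.cosh u - Real.sinh u - u ^ 3 / 3 := by
    apply aux_nonneg_of_deriv (f' := fun x => x * (Real.sinh x - x)) (by simp) _ _ hu
    · intro x
      have := (((hasDerivAt_id x).mul (Real.hasDerivAt_cosh x)).sub
        (Real.hasDerivAt_sinh x)).sub ((hasDerivAt_pow 3 x).div_const 3)
      refine this.congr_deriv ?_
      simp only [id_eq]; push_cast; ring
    · intro x hx
      exact mul_nonneg hx.le (by linarith [Real.self_lt_sinh_iff.mpr hx])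
  linarith

private lemma L3 {u : ℝ} (hu : 0 < u) :
    u * Real.cosh u - Real.sinh u < u ^ 3 / 3 * Real.cosh u := by
  have : 0 < u ^ 3 / 3 * Real.cosh u - (u * Real.cosh u - Real.sinh u) := by
    apply aux_pos_of_deriv
      (f' := fun x => x * (x * Real.cosh x - Real.sinh x) + x ^ 3 / 3 * Real.sinh x)
      (by simp) _ _ hu
    · intro x
      have := ((((hasDerivAt_pow 3 x).div_const 3).mul (Real.hasDerivAt_cosh x)).sub
        (((hasDerivAt_id x).mul (Real.hasDerivAt_cosh x)).sub (Real.hasDerivAt_sinh x)))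
      refine this.congr_deriv ?_
      simp only [id_eq]; push_cast; ring
    · intro x hx
      have h1 := L1 hx
      have h2 := Real.sinh_pos_iff.mpr hx
      have : 0 < x ^ 3 / 3 := by positivity
      nlinarith
  linarith

/-- rewrite g in terms of sinh/cosh -/
private lemma g_eq {x : ℝ} (hx : 0 < x) :
    (1 / x) * (1 - Real.tanh (Real.sqrt (3 * x)) / Real.sqrt (3 * x)) =
      3 * (Real.sqrt (3 * x) * Real.cosh (Real.sqrt (3 * x)) - Real.sinh (Real.sqrt (3 * x))) /
        ((Real.sqrt (3 * x)) ^ 3 * Real.cosh (Real.sqrt (3 * x))) := by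
  set u := Real.sqrt (3 * x) with hu_def
  have hu : 0 < u := Real.sqrt_pos.mpr (by linarith)
  have hu2 : u ^ 2 = 3 * x := Real.sq_sqrt (by linarith)
  have hc : 0 < Real.cosh u := Real.cosh_pos _
  have hx' : x = u ^ 2 / 3 := by linarith
  rw [Real.tanh_eq_sinh_div_cosh, hx']
  field_simp

/-- With `g(x) = (1/x)(1 − tanh(√(3x))/√(3x))`:
(i) `0 < g(x) < 1` for all `x > 0`; (ii) `g(x) → 1` as `x → 0⁺`;
(iii) `g(x) → 0` as `x → ∞`. Consequently, for fixed bare mass `M_b > 0`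
the gravitational mass `M_g(x) = M_b·g(x)` satisfies `0 < M_g(x) < M_b`,
`M_g(x) → M_b` as `x → 0⁺` (infinite dispersion) and `M_g(x) → 0` as
`x → ∞` (infinite compression). -/
theorem mass_ratio_bounds_and_limits :
    (∀ x : ℝ, 0 < x →
      0 < (1 / x) * (1 - Real.tanh (Real.sqrt (3 * x)) / Real.sqrt (3 * x)) ∧
      (1 / x) * (1 - Real.tanh (Real.sqrt (3 * x)) / Real.sqrt (3 * x)) < 1) ∧
    Tendsto (fun x : ℝ => (1 / x) * (1 - Real.tanh (Real.sqrt (3 * x)) / Real.sqrt (3 * x)))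
      (𝓝[>] 0) (𝓝 1) ∧
    Tendsto (fun x : ℝ => (1 / x) * (1 - Real.tanh (Real.sqrt (3 * x)) / Real.sqrt (3 * x)))
      atTop (𝓝 0) ∧
    ∀ M_b : ℝ, 0 < M_b →
      (∀ x : ℝ, 0 < x →
        0 < M_b * ((1 / x) * (1 - Real.tanh (Real.sqrt (3 * x)) / Real.sqrt (3 * x))) ∧
        M_b * ((1 / x) * (1 - Real.tanh (Real.sqrt (3 * x)) / Real.sqrt (3 * x))) < M_b) ∧
      Tendsto (fun x : ℝ =>
          M_b * ((1 / x) * (1 - Real.tanh (Real.sqrt (3 * x)) / Real.sqrt (3 * x))))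
        (𝓝[>] 0) (𝓝 M_b) ∧
      Tendsto (fun x : ℝ =>
          M_b * ((1 / x) * (1 - Real.tanh (Real.sqrt (3 * x)) / Real.sqrt (3 * x))))
        atTop (𝓝 0) := by
  set g : ℝ → ℝ :=
    fun x => (1 / x) * (1 - Real.tanh (Real.sqrt (3 * x)) / Real.sqrt (3 * x)) with hg_def
  -- (i)
  have hbounds : ∀ x : ℝ, 0 < x → 0 < g x ∧ g x < 1 := by
    intro x hx
    set u := Real.sqrt (3 * x) with hu_def
    have hu : 0 < u := Real.sqrt_pos.mpr (by linarith)
    have hc : 0 < Real.cosh u := Real.cosh_pos _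
    have hnum : 0 < u * Real.cosh u - Real.sinh u := by linarith [L1 hu]
    have hden : 0 < u ^ 3 * Real.cosh u := by positivity
    rw [hg_def]
    simp only
    rw [g_eq hx]
    constructor
    · positivity
    · rw [div_lt_one hden]
      nlinarith [L3 hu]
  -- lower bound for squeeze near 0
  have hlow : ∀ x : ℝ, 0 < x → 1 / Real.cosh (Real.sqrt (3 * x)) ≤ g x := by
    intro x hx
    set u := Real.sqrt (3 * x) with hu_def
    have hu : 0 < u := Real.sqrt_pos.mpr (by linarith)
    have hc : 0 < Real.cosh u := Real.cosh_pos _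
    have hden : 0 < u ^ 3 * Real.cosh u := by positivity
    rw [hg_def]
    simp only
    rw [g_eq hx, div_le_div_iff₀ hc hden]
    nlinarith [L2 hu.le]
  -- (ii)
  have hlim0 : Tendsto g (𝓝[>] 0) (𝓝 1) := by
    apply tendsto_of_tendsto_of_tendsto_of_le_of_le'
      (g := fun x : ℝ => 1 / Real.cosh (Real.sqrt (3 * x))) (h := fun _ : ℝ => (1 : ℝ))
    · have hcont : Continuous fun x : ℝ => 1 / Real.cosh (Real.sqrt (3 * x)) := by
        apply Continuous.div continuous_const (Real.continuous_cosh.comp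
          (Real.continuous_sqrt.comp (by continuity)))
        intro x; exact (Real.cosh_pos _).ne'
      have := hcont.tendsto 0
      simp only [mul_zero, Real.sqrt_zero, Real.cosh_zero, div_one] at this
      exact this.mono_left nhdsWithin_le_nhds
    · exact tendsto_const_nhds
    · filter_upwards [self_mem_nhdsWithin] with x hx
      exact hlow x hx
    · filter_upwards [self_mem_nhdsWithin] with x hx
      exact (hbounds x hx).2.le
  -- (iii)
  have hliminf : Tendsto g atTop (𝓝 0) := by
    apply tendsto_of_tendsto_of_tendsto_of_le_of_le'
      (g := fun _ : ℝ => (0 : ℝ)) (h := fun x : ℝ => 1 / x)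
    · exact tendsto_const_nhds
    · simpa only [one_div] using tendsto_inv_atTop_zero
    · filter_upwards [eventually_gt_atTop (0 : ℝ)] with x hx
      exact (hbounds x hx).1.le
    · filter_upwards [eventually_gt_atTop (0 : ℝ)] with x hx
      have h := (hbounds x hx).2
      calc g x ≤ (1 / x) * 1 := by
            rw [hg_def]
            apply mul_le_mul_of_nonneg_left _ (by positivity)
            have hu : 0 < Real.sqrt (3 * x) := Real.sqrt_pos.mpr (by linarith)
            have : 0 < Real.tanh (Real.sqrt (3 * x)) / Real.sqrt (3 * x) := by
              apply div_pos _ hu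
              rw [Real.tanh_eq_sinh_div_cosh]
              exact div_pos (Real.sinh_pos_iff.mpr hu) (Real.cosh_pos _)
            linarith
        _ = 1 / x := mul_one _
  refine ⟨hbounds, hlim0, hliminf, ?_⟩
  intro M_b hM
  refine ⟨fun x hx => ⟨mul_pos hM (hbounds x hx).1, ?_⟩, ?_, ?_⟩
  · nth_rewrite 2 [← mul_one M_b]
    exact mul_lt_mul_of_pos_left (hbounds x hx).2 hM
  · simpa [hg_def] using hlim0.const_mul M_b
  · simpa [hg_def] using hliminf.const_mul M_b
end
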